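/- Define R(s,t) = 1 + |μ(s,t)|·c(s,t)·arcsin c(s,t) - c(s,t)² for s,t ∈ (-1,1), with μ(s,t) = (s-t)/(1-st) and c(s,t) = √((1-s²)(1-t²))/(1-st). Then 0 ≤ R(s,t) ≤ 1 for all s,t ∈ (-1,1), with R(s,s) = 0. -/

import Mathlib

open Real

lemma sqrt_mul_arcsin_le (x : ℝ) (h0 : 0 ≤ x) (h1 : x ≤ 1) :
    Real.sqrt (1 - x ^ 2) * Real.arcsin x ≤ x := by
  rcases eq_or_lt_of_le h0 with h | hx0
  · simp [← h]
  rcases eq_or_lt_of_le h1 with h | hx1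
  · simp [h]
  have hx2 : 0 < 1 - x ^ 2 := by nlinarith
  have hsq : 0 < Real.sqrt (1 - x ^ 2) := Real.sqrt_pos.mpr hx2
  have ha0 : 0 < Real.arcsin x := Real.arcsin_pos.mpr hx0
  have ha1 : Real.arcsin x < π / 2 := by
    have := Real.arcsin_lt_pi_div_two (x := x)
    simpa using this.mpr hx1
  have htan := Real.lt_tan ha0 ha1
  rw [Real.tan_arcsin] at htan
  have : Real.sqrt (1 - x ^ 2) * Real.arcsin x ≤
      Real.sqrt (1 - x ^ 2) * (x / Real.sqrt (1 - x ^ 2)) :=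
    mul_le_mul_of_nonneg_left htan.le hsq.le
  rwa [mul_div_cancel₀ _ hsq.ne'] at this

/-- The normalized 2-point correlation R(s,t) = 1 + |μ(s,t)| c(s,t) arcsin c(s,t) - c(s,t)²
satisfies 0 ≤ R(s,t) ≤ 1 on (-1,1)², and R(s,s) = 0. -/
theorem normalized_two_point_correlation_bounds (s t : ℝ)
    (hs : s ∈ Set.Ioo (-1 : ℝ) 1) (ht : t ∈ Set.Ioo (-1 : ℝ) 1) :
    0 ≤ 1 + |(s - t) / (1 - s * t)| * (Real.sqrt ((1 - s ^ 2) * (1 - t ^ 2)) / (1 - s * t))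
          * Real.arcsin (Real.sqrt ((1 - s ^ 2) * (1 - t ^ 2)) / (1 - s * t))
        - (Real.sqrt ((1 - s ^ 2) * (1 - t ^ 2)) / (1 - s * t)) ^ 2 ∧
    1 + |(s - t) / (1 - s * t)| * (Real.sqrt ((1 - s ^ 2) * (1 - t ^ 2)) / (1 - s * t))
          * Real.arcsin (Real.sqrt ((1 - s ^ 2) * (1 - t ^ 2)) / (1 - s * t))
        - (Real.sqrt ((1 - s ^ 2) * (1 - t ^ 2)) / (1 - s * t)) ^ 2 ≤ 1 ∧
    (s = t →
      1 + |(s - t) / (1 - s * t)| * (Real.sqrt ((1 - s ^ 2) * (1 - t ^ 2)) / (1 - s * t))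
          * Real.arcsin (Real.sqrt ((1 - s ^ 2) * (1 - t ^ 2)) / (1 - s * t))
        - (Real.sqrt ((1 - s ^ 2) * (1 - t ^ 2)) / (1 - s * t)) ^ 2 = 0) := by
  obtain ⟨hs1, hs2⟩ := hs
  obtain ⟨ht1, ht2⟩ := ht
  have hst : 0 < 1 - s * t := by nlinarith
  have hrad : 0 ≤ (1 - s ^ 2) * (1 - t ^ 2) := mul_nonneg (by nlinarith) (by nlinarith)
  set c : ℝ := Real.sqrt ((1 - s ^ 2) * (1 - t ^ 2)) / (1 - s * t) with hc
  set m : ℝ := |(s - t) / (1 - s * t)| with hm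
  have hc0 : 0 ≤ c := div_nonneg (Real.sqrt_nonneg _) hst.le
  have hcsq : c ^ 2 = (1 - s ^ 2) * (1 - t ^ 2) / (1 - s * t) ^ 2 := by
    rw [hc, div_pow, Real.sq_sqrt hrad]
  have hmsq : m ^ 2 = (s - t) ^ 2 / (1 - s * t) ^ 2 := by
    rw [hm, sq_abs, div_pow]
  have hsum : m ^ 2 + c ^ 2 = 1 := by
    rw [hmsq, hcsq, ← add_div, div_eq_one_iff_eq (by positivity)]
    ring
  have hc1 : c ≤ 1 := by nlinarith [sq_nonneg m]
  have hm0 : 0 ≤ m := abs_nonneg _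
  have hmeq : m = Real.sqrt (1 - c ^ 2) := by
    rw [show (1 : ℝ) - c ^ 2 = m ^ 2 by linarith, Real.sqrt_sq hm0]
  have ha0 : 0 ≤ Real.arcsin c := Real.arcsin_nonneg.mpr hc0
  have hkey : m * Real.arcsin c ≤ c := by
    rw [hmeq]; exact sqrt_mul_arcsin_le c hc0 hc1
  have hub : m * c * Real.arcsin c ≤ c ^ 2 := by
    have := mul_le_mul_of_nonneg_left hkey hc0
    nlinarith
  refine ⟨by nlinarith [mul_nonneg (mul_nonneg hm0 hc0) ha0], by nlinarith, ?_⟩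
  intro hst2
  subst hst2
  have hs2' : 0 < 1 - s ^ 2 := by nlinarith
  have hceq : c = 1 := by
    rw [hc, show (1 - s ^ 2) * (1 - s ^ 2) = (1 - s ^ 2) ^ 2 by ring,
      Real.sqrt_sq hs2'.le, show s * s = s ^ 2 by ring, div_self hs2'.ne']
  have hmeq0 : m = 0 := by simp [hm]
  rw [hceq, hmeq0]
  ring
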